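/- (Flag PDE solution method, special case) Let A = ℂ[x_1,...,x_n,y_1,...,y_n], T₁ = ∂_{x_1}∂_{y_1} with right inverse T₁⁻ = ∫_{(x_1)}∫_{(y_1)} (formal integration in x_1 and y_1), and T₂ = Σ_{i=2}^n ∂_{x_i}∂_{y_i}. Then for every monomial x^α y^β with α₁β₁ = 0, the series f = Σ_{i=0}^∞ (−T₁⁻ T₂)^i (x^α y^β) is a finite sum and satisfies (T₁ + T₂)(f) = 0; explicitly f = Σ_{i=0}^∞ ((−1)^i x_1^i y_1^i / ∏_{r=1}^i (α₁+r)(β₁+r))·T₂^i(x^α y^β). -/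

import Mathlib

open MvPolynomial

noncomputable section

abbrev PolyA (n : ℕ) := MvPolynomial (Fin n ⊕ Fin n) ℂ

variable (n : ℕ)

def xv (i : Fin n) : PolyA n := X (Sum.inl i)
def yv (i : Fin n) : PolyA n := X (Sum.inr i)
def pdx (i : Fin n) : Module.End ℂ (PolyA n) :=
  (pderiv (Sum.inl i) : Derivation ℂ (PolyA n) (PolyA n)).toLinearMap
def pdy (i : Fin n) : Module.End ℂ (PolyA n) :=
  (pderiv (Sum.inr i) : Derivation ℂ (PolyA n) (PolyA n)).toLinearMap

/-- T₁ = ∂_{x_1}∂_{y_1} -/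
def T1op (hn : 1 ≤ n) : Module.End ℂ (PolyA n) := pdx n ⟨0, hn⟩ ∘ₗ pdy n ⟨0, hn⟩
/-- T₂ = Σ_{i=2}^n ∂_{x_i}∂_{y_i} -/
def T2op (hn : 1 ≤ n) : Module.End ℂ (PolyA n) :=
  ∑ i : Fin n, if i = (⟨0, hn⟩ : Fin n) then 0 else pdx n i ∘ₗ pdy n i

/-- the monomial x^α y^β -/
def monom (α β : Fin n → ℕ) : PolyA n := (∏ i, xv n i ^ α i) * ∏ i, yv n i ^ β i

section AuxLemmas
variable {σ : Type*}


lemma pderiv_comm' (i j : σ) (p : MvPolynomial σ ℂ) :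
    pderiv i (pderiv j p) = pderiv j (pderiv i p) := by
  classical
  induction p using MvPolynomial.induction_on' with
  | monomial s a =>
    rcases eq_or_ne i j with rfl | hij
    · rfl
    · simp only [pderiv_monomial, Finsupp.tsub_apply, Finsupp.single_eq_of_ne' hij.symm,
        Finsupp.single_eq_of_ne' hij, tsub_zero]
      rw [tsub_tsub, tsub_tsub, add_comm (Finsupp.single j 1), mul_right_comm]
  | add p q hp hq => simp [hp, hq]

lemma pderiv_totalDegree' {j : σ} {p : MvPolynomial σ ℂ} {e : ℕ} (h : p.totalDegree ≤ e + 1) :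
    (pderiv j p).totalDegree ≤ e := by
  classical
  conv_lhs => rw [p.as_sum]
  rw [map_sum]
  apply totalDegree_finsetSum_le
  intro v hv
  rw [pderiv_monomial]
  rcases Nat.eq_zero_or_pos (v j) with h0 | h1
  · simp [h0]
  · refine (totalDegree_monomial_le _ _).trans ?_
    have hle : Finsupp.single j 1 ≤ v := by
      rw [Finsupp.single_le_iff]; exact h1
    have hs : (v.sum fun _ e => e) ≤ e + 1 := (le_totalDegree hv).trans h
    have key : ((v - Finsupp.single j 1).sum fun _ e => e) + ((Finsupp.single j 1).sum fun _ e => e)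
        = v.sum fun _ e => e := by
      rw [← Finsupp.sum_add_index' (fun _ => rfl) (fun _ _ _ => rfl), tsub_add_cancel_of_le hle]
    have h2 : ((Finsupp.single j 1).sum fun _ e => e) = 1 := Finsupp.sum_single_index rfl
    show ((v - Finsupp.single j 1).sum fun _ e => e) ≤ e
    omega

lemma D_mul_zero (D : Derivation ℂ (MvPolynomial σ ℂ) (MvPolynomial σ ℂ))
    {p q : MvPolynomial σ ℂ} (hp : D p = 0) (hq : D q = 0) : D (p * q) = 0 := by
  rw [D.leibniz, hp, hq]; simp

lemma D_mul_left (D : Derivation ℂ (MvPolynomial σ ℂ) (MvPolynomial σ ℂ))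
    {q : MvPolynomial σ ℂ} (hq : D q = 0) (p : MvPolynomial σ ℂ) : D (q * p) = q * D p := by
  rw [D.leibniz, hq]; simp [smul_eq_mul]

lemma D_pow_zero (D : Derivation ℂ (MvPolynomial σ ℂ) (MvPolynomial σ ℂ))
    {p : MvPolynomial σ ℂ} (hp : D p = 0) (k : ℕ) : D (p ^ k) = 0 := by
  rw [D.leibniz_pow, hp]; simp

lemma D_prod_zero {ι : Type*} (D : Derivation ℂ (MvPolynomial σ ℂ) (MvPolynomial σ ℂ))
    (s : Finset ι) (f : ι → MvPolynomial σ ℂ) (h : ∀ i ∈ s, D (f i) = 0) :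
    D (∏ i ∈ s, f i) = 0 := by
  classical
  induction s using Finset.cons_induction with
  | empty => simp
  | cons a s ha ih =>
    rw [Finset.prod_cons]
    exact D_mul_zero D (h a (Finset.mem_cons_self a s))
      (ih fun i hi => h i (Finset.mem_cons_of_mem hi))

lemma coeff_rec (a b i : ℕ) :
    ((-1:ℂ)^(i+1) / ∏ r ∈ Finset.Icc 1 (i+1), (((a:ℂ) + r) * ((b:ℂ) + r)))
      * (((i+a+1)*(i+b+1) : ℕ):ℂ)
    = - ((-1:ℂ)^i / ∏ r ∈ Finset.Icc 1 i, (((a:ℂ) + r) * ((b:ℂ) + r))) := by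
  have hfac : ∀ (c r : ℕ), 1 ≤ r → ((c:ℂ) + r) ≠ 0 := by
    intro c r hr
    have : ((c:ℂ) + r) = ((c + r : ℕ) : ℂ) := by push_cast; ring
    rw [this]
    exact Nat.cast_ne_zero.mpr (by omega)
  have hP : ∀ j : ℕ, (∏ r ∈ Finset.Icc 1 j, (((a:ℂ) + r) * ((b:ℂ) + r))) ≠ 0 := by
    intro j
    apply Finset.prod_ne_zero_iff.mpr
    intro r hr
    exact mul_ne_zero (hfac a r (Finset.mem_Icc.mp hr).1) (hfac b r (Finset.mem_Icc.mp hr).1)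
  rw [Finset.prod_Icc_succ_top (by omega : 1 ≤ i + 1)]
  have h2 := mul_ne_zero (hfac a (i+1) (by omega)) (hfac b (i+1) (by omega))
  have hQK : (((i+a+1)*(i+b+1):ℕ):ℂ) = ((a:ℂ) + ↑(i+1)) * ((b:ℂ) + ↑(i+1)) := by
    push_cast; ring
  rw [hQK, div_mul_eq_mul_div, mul_comm ((-1:ℂ)^(i+1)),
    mul_comm (∏ r ∈ Finset.Icc 1 i, (((a:ℂ) + r) * ((b:ℂ) + r))),
    mul_div_mul_left _ _ h2, pow_succ, mul_neg_one, neg_div]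

lemma pderiv_td0' {σ : Type*} {j : σ} {p : MvPolynomial σ ℂ} (h : p.totalDegree = 0) :
    pderiv j p = 0 := by
  classical
  conv_lhs => rw [p.as_sum]
  rw [map_sum]
  apply Finset.sum_eq_zero
  intro v hv
  have hvj : v j = 0 := by
    by_contra hne
    have h2 : v j ≤ v.sum fun _ e => e := by
      apply Finset.single_le_sum (f := fun a => v a) (fun _ _ => Nat.zero_le _)
      rw [Finsupp.mem_support_iff]; exact hne
    have h3 := le_totalDegree hv
    omega
  rw [pderiv_monomial, hvj]; simp

variable {n}


lemma T2_comm (hn : 1 ≤ n) (k l : ℕ) (p : PolyA n) :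
    T2op n hn (xv n ⟨0,hn⟩ ^ k * yv n ⟨0,hn⟩ ^ l * p)
      = xv n ⟨0,hn⟩ ^ k * yv n ⟨0,hn⟩ ^ l * T2op n hn p := by
  set z : Fin n := ⟨0, hn⟩
  unfold T2op
  rw [LinearMap.sum_apply, LinearMap.sum_apply, Finset.mul_sum]
  apply Finset.sum_congr rfl
  intro i _
  by_cases hi : i = z
  · simp [hi, if_pos (show z = (⟨0, hn⟩ : Fin n) from rfl)]
  · simp only [if_neg (show ¬ i = (⟨0, hn⟩ : Fin n) from hi), LinearMap.comp_apply]
    have hxy : ∀ j : Fin n, j ≠ z → ∀ D : Derivation ℂ (PolyA n) (PolyA n),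
        D = pderiv (Sum.inl j) ∨ D = pderiv (Sum.inr j) →
        D (xv n z ^ k * yv n z ^ l) = 0 := by
      intro j hj D hD
      apply D_mul_zero
      · apply D_pow_zero; rcases hD with rfl | rfl
        · exact pderiv_X_of_ne (by simp [xv, hj.symm])
        · exact pderiv_X_of_ne (by simp [xv])
      · apply D_pow_zero; rcases hD with rfl | rfl
        · exact pderiv_X_of_ne (by simp [yv])
        · exact pderiv_X_of_ne (by simp [yv, hj.symm])
    show pdx n i (pdy n i _) = _
    have h1 : pdy n i (xv n z ^ k * yv n z ^ l * p)
        = xv n z ^ k * yv n z ^ l * pdy n i p :=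
      D_mul_left _ (hxy i hi _ (Or.inr rfl)) p
    rw [h1]
    exact D_mul_left _ (hxy i hi _ (Or.inl rfl)) _

lemma T2_pow_comm (hn : 1 ≤ n) (k l j : ℕ) (p : PolyA n) :
    (T2op n hn ^ j) (xv n ⟨0,hn⟩ ^ k * yv n ⟨0,hn⟩ ^ l * p)
      = xv n ⟨0,hn⟩ ^ k * yv n ⟨0,hn⟩ ^ l * (T2op n hn ^ j) p := by
  induction j generalizing p with
  | zero => simp
  | succ j ih =>
    rw [pow_succ, Module.End.mul_apply, Module.End.mul_apply, T2_comm hn, ih]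

lemma pderiv_T2_comm (hn : 1 ≤ n) (v : Fin n ⊕ Fin n) (p : PolyA n) :
    pderiv v (T2op n hn p) = T2op n hn (pderiv v p) := by
  unfold T2op
  rw [LinearMap.sum_apply, LinearMap.sum_apply, map_sum]
  apply Finset.sum_congr rfl
  intro i _
  by_cases hi : i = (⟨0,hn⟩ : Fin n)
  · simp [hi]
  · simp only [if_neg hi, LinearMap.comp_apply]
    show pderiv v (pderiv (Sum.inl i) (pderiv (Sum.inr i) p)) = _
    rw [pderiv_comm' v, pderiv_comm' v]
    rfl

lemma pderiv_T2_pow_comm (hn : 1 ≤ n) (v : Fin n ⊕ Fin n) (j : ℕ) (p : PolyA n) :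
    pderiv v ((T2op n hn ^ j) p) = (T2op n hn ^ j) (pderiv v p) := by
  induction j generalizing p with
  | zero => simp
  | succ j ih => rw [pow_succ, Module.End.mul_apply, Module.End.mul_apply, ih, pderiv_T2_comm hn]

lemma T2_totalDegree (hn : 1 ≤ n) {p : PolyA n} {e : ℕ} (h : p.totalDegree ≤ e + 1) :
    (T2op n hn p).totalDegree ≤ e := by
  unfold T2op
  rw [LinearMap.sum_apply]
  apply totalDegree_finsetSum_le
  intro i _
  by_cases hi : i = (⟨0,hn⟩ : Fin n)
  · simp [hi]
  · simp only [if_neg hi, LinearMap.comp_apply]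
    show ((pderiv (Sum.inl i)) ((pderiv (Sum.inr i)) p)).totalDegree ≤ e
    exact pderiv_totalDegree' ((pderiv_totalDegree' h).trans (by omega))

lemma T2_pow_vanish (hn : 1 ≤ n) (d : ℕ) (p : PolyA n) (h : p.totalDegree ≤ d) :
    (T2op n hn ^ (d + 1)) p = 0 := by
  induction d generalizing p with
  | zero =>
    rw [pow_one]
    unfold T2op
    rw [LinearMap.sum_apply]
    apply Finset.sum_eq_zero
    intro i _
    by_cases hi : i = (⟨0,hn⟩ : Fin n)
    · simp [hi]
    · simp only [if_neg hi, LinearMap.comp_apply]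
      show (pderiv (Sum.inl i)) ((pderiv (Sum.inr i)) p) = 0
      rw [pderiv_td0' (le_antisymm h (Nat.zero_le _)), map_zero]
  | succ d ih =>
    rw [pow_succ, Module.End.mul_apply]
    exact ih _ (T2_totalDegree hn h)

lemma T1_calc (hn : 1 ≤ n) (g : PolyA n)
    (hx : pderiv (Sum.inl (⟨0,hn⟩ : Fin n)) g = 0)
    (hy : pderiv (Sum.inr (⟨0,hn⟩ : Fin n)) g = 0) (p q : ℕ) :
    T1op n hn (xv n ⟨0,hn⟩ ^ (p+1) * yv n ⟨0,hn⟩ ^ (q+1) * g)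
      = (((p+1)*(q+1) : ℕ) : ℂ) • (xv n ⟨0,hn⟩ ^ p * yv n ⟨0,hn⟩ ^ q * g) := by
  set z : Fin n := ⟨0, hn⟩
  have hyx : pderiv (Sum.inr z) (xv n z) = 0 := pderiv_X_of_ne (by simp [xv])
  have hxy : pderiv (Sum.inl z) (yv n z) = 0 := pderiv_X_of_ne (by simp [yv])
  have hxx : pderiv (Sum.inl z) (xv n z) = 1 := pderiv_X_self _
  have hyy : pderiv (Sum.inr z) (yv n z) = 1 := pderiv_X_self _
  show pdx n z (pdy n z _) = _
  have step1 : pdy n z (xv n z ^ (p+1) * yv n z ^ (q+1) * g)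
      = ((q+1 : ℕ) : PolyA n) * (xv n z ^ (p+1) * yv n z ^ q * g) := by
    show (pderiv (Sum.inr z)) _ = _
    rw [pderiv_mul, pderiv_mul, hy, D_pow_zero _ hyx, pderiv_pow, hyy]
    simp
    ring
  rw [step1]
  show (pderiv (Sum.inl z)) _ = _
  rw [pderiv_mul, Derivation.map_natCast, pderiv_mul, pderiv_mul, hx,
    D_pow_zero _ hxy, pderiv_pow, hxx]
  rw [Nat.cast_smul_eq_nsmul, nsmul_eq_mul]
  push_cast
  ring


end AuxLemmas

/-- For α₁β₁ = 0, the (finite) series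
f = Σ_i ((−1)^i x₁^i y₁^i / ∏_{r=1}^i (α₁+r)(β₁+r))·T₂^i(x^α y^β)
satisfies (T₁+T₂)(f) = 0. -/
theorem flag_pde_solution (hn : 1 ≤ n) (α β : Fin n → ℕ)
    (h0 : α ⟨0, hn⟩ * β ⟨0, hn⟩ = 0) :
    (T1op n hn + T2op n hn)
      (∑ᶠ i : ℕ,
        (((-1 : ℂ) ^ i / ∏ r ∈ Finset.Icc 1 i, ((α ⟨0, hn⟩ + r) * (β ⟨0, hn⟩ + r) : ℂ))
          • (xv n ⟨0, hn⟩ ^ i * yv n ⟨0, hn⟩ ^ i * (T2op n hn ^ i) (monom n α β)))) = 0 := by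
  set z : Fin n := ⟨0, hn⟩ with hzdef
  set a := α z with ha
  set b := β z with hb
  set m' : PolyA n := (∏ i ∈ Finset.univ.erase z, xv n i ^ α i) *
      ∏ i ∈ Finset.univ.erase z, yv n i ^ β i with hm'
  have hmono : monom n α β = xv n z ^ a * yv n z ^ b * m' := by
    unfold monom
    rw [hm', ← Finset.mul_prod_erase Finset.univ (fun i => xv n i ^ α i) (Finset.mem_univ z),
      ← Finset.mul_prod_erase Finset.univ (fun i => yv n i ^ β i) (Finset.mem_univ z)]
    ring
  have hyx : pderiv (Sum.inr z) (xv n z) = 0 := pderiv_X_of_ne (by simp [xv])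
  have hxy : pderiv (Sum.inl z) (yv n z) = 0 := pderiv_X_of_ne (by simp [yv])
  have hyy : pderiv (Sum.inr z) (yv n z) = 1 := pderiv_X_self _
  have hkill : ∀ v : Fin n ⊕ Fin n, (v = Sum.inl z ∨ v = Sum.inr z) → pderiv v m' = 0 := by
    intro v hv
    apply D_mul_zero
    · apply D_prod_zero; intro i hi
      apply D_pow_zero
      have hiz : i ≠ z := Finset.ne_of_mem_erase hi
      rcases hv with rfl | rfl
      · exact pderiv_X_of_ne (by simp [xv, hiz])
      · exact pderiv_X_of_ne (by simp [xv])
    · apply D_prod_zero; intro i hi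
      apply D_pow_zero
      have hiz : i ≠ z := Finset.ne_of_mem_erase hi
      rcases hv with rfl | rfl
      · exact pderiv_X_of_ne (by simp [yv])
      · exact pderiv_X_of_ne (by simp [yv, hiz])
  have hgx : ∀ j, pderiv (Sum.inl z) ((T2op n hn ^ j) m') = 0 := fun j => by
    rw [pderiv_T2_pow_comm hn, hkill _ (Or.inl rfl), map_zero]
  have hgy : ∀ j, pderiv (Sum.inr z) ((T2op n hn ^ j) m') = 0 := fun j => by
    rw [pderiv_T2_pow_comm hn, hkill _ (Or.inr rfl), map_zero]
  have hg : ∀ j, (T2op n hn ^ j) (monom n α β)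
      = xv n z ^ a * yv n z ^ b * (T2op n hn ^ j) m' := fun j => by
    rw [hmono, T2_pow_comm hn]
  set N := (monom n α β).totalDegree + 1 with hN
  have hvan : ∀ i, N ≤ i → (T2op n hn ^ i) (monom n α β) = 0 := by
    intro i hi
    have h0' : (T2op n hn ^ N) (monom n α β) = 0 := T2_pow_vanish hn _ _ le_rfl
    have hieq : i = (i - N) + N := by omega
    rw [hieq, pow_add, Module.End.mul_apply, h0', map_zero]
  have hbody : ∀ i, N ≤ i →
      (((-1 : ℂ) ^ i / ∏ r ∈ Finset.Icc 1 i, ((a + r) * (b + r) : ℂ))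
        • (xv n z ^ i * yv n z ^ i * (T2op n hn ^ i) (monom n α β))) = 0 := fun i hi => by
    rw [hvan i hi, mul_zero, smul_zero]
  have hsupp : (Function.support fun i : ℕ =>
      (((-1 : ℂ) ^ i / ∏ r ∈ Finset.Icc 1 i, ((a + r) * (b + r) : ℂ))
        • (xv n z ^ i * yv n z ^ i * (T2op n hn ^ i) (monom n α β))))
      ⊆ ↑(Finset.range (N + 1)) := by
    intro i hi
    simp only [Function.mem_support] at hi
    simp only [Finset.coe_range, Set.mem_Iio]
    by_contra hlt
    exact hi (hbody i (by omega))
  rw [finsum_eq_sum_of_support_subset _ hsupp, map_sum]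
  have hT1monom : T1op n hn (monom n α β) = 0 := by
    rw [hmono]
    show pdx n z (pdy n z _) = 0
    have step : pdy n z (xv n z ^ a * yv n z ^ b * m')
        = ((b : ℕ) : PolyA n) * (xv n z ^ a * yv n z ^ (b - 1) * m') := by
      show (pderiv (Sum.inr z)) _ = _
      rw [pderiv_mul, pderiv_mul, hkill _ (Or.inr rfl), D_pow_zero _ hyx, pderiv_pow, hyy]
      simp
      ring
    rw [step]
    rcases Nat.mul_eq_zero.mp h0 with haz | hbz
    · show (pderiv (Sum.inl z)) _ = 0
      apply D_mul_zero
      · exact Derivation.map_natCast _ b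
      · apply D_mul_zero
        · apply D_mul_zero
          · rw [haz, pow_zero]; exact (pderiv (Sum.inl z)).map_one_eq_zero
          · exact D_pow_zero _ hxy _
        · exact hkill _ (Or.inl rfl)
    · rw [hbz]
      show (pderiv (Sum.inl z)) _ = 0
      simp
  have hterm : ∀ i ∈ Finset.range (N + 1),
      (T1op n hn + T2op n hn)
        (((-1 : ℂ) ^ i / ∏ r ∈ Finset.Icc 1 i, ((a + r) * (b + r) : ℂ))
          • (xv n z ^ i * yv n z ^ i * (T2op n hn ^ i) (monom n α β)))
      = (fun i : ℕ => T1op n hn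
          (((-1 : ℂ) ^ i / ∏ r ∈ Finset.Icc 1 i, ((a + r) * (b + r) : ℂ))
            • (xv n z ^ i * yv n z ^ i * (T2op n hn ^ i) (monom n α β)))) i
        - (fun i : ℕ => T1op n hn
          (((-1 : ℂ) ^ i / ∏ r ∈ Finset.Icc 1 i, ((a + r) * (b + r) : ℂ))
            • (xv n z ^ i * yv n z ^ i * (T2op n hn ^ i) (monom n α β)))) (i + 1) := by
    intro i _
    simp only [LinearMap.add_apply]
    rw [sub_eq_add_neg]
    congr 1
    -- T2 part = - T1 part at i+1
    rw [map_smul, map_smul]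
    rw [T2_comm hn]
    rw [← Module.End.mul_apply (T2op n hn), ← pow_succ']
    rw [hg (i + 1)]
    have e1 : xv n z ^ i * yv n z ^ i * (xv n z ^ a * yv n z ^ b * (T2op n hn ^ (i+1)) m')
        = xv n z ^ (i + a) * yv n z ^ (i + b) * (T2op n hn ^ (i+1)) m' := by ring
    have e2 : xv n z ^ (i+1) * yv n z ^ (i+1) * (xv n z ^ a * yv n z ^ b * (T2op n hn ^ (i+1)) m')
        = xv n z ^ (i + a + 1) * yv n z ^ (i + b + 1) * (T2op n hn ^ (i+1)) m' := by ring
    rw [e1, e2, T1_calc hn _ (hgx (i+1)) (hgy (i+1)) (i + a) (i + b)]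
    rw [smul_smul, coeff_rec a b i, neg_smul, neg_neg]
  rw [Finset.sum_congr rfl hterm, Finset.sum_range_sub']
  have hb0 : (((-1 : ℂ) ^ (0:ℕ) / ∏ r ∈ Finset.Icc (1:ℕ) 0, ((a + r) * (b + r) : ℂ))
      • (xv n z ^ 0 * yv n z ^ 0 * (T2op n hn ^ 0) (monom n α β))) = monom n α β := by
    rw [Finset.Icc_eq_empty (by omega)]
    simp
  rw [hb0, hT1monom, hbody (N + 1) (by omega), map_zero, sub_zero]
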